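/- On the quotient rpL*(V) = pL(V,∘)/(∘⋆∘) of the free graded pre-Lie algebra by the ideal generated by ∘⋆∘, there exists a unique degree +1 map d with d(v)=0 for v∈V, d(∘)=0, and d(a⋆b) = d(a)⋆b + (−1)^{|a|}a⋆d(b) + Φ(∘,a,b); moreover d² = 0. -/

import Mathlib

/-- The universal property of the free graded pre-Lie algebra `pL*(V,∘)` on a vector
space `V` placed in degree `0` and a single generator `∘` in degree `+1`, over a
field of characteristic zero.  The grading is by submodules `𝒜 i`; graded pre-Lie
means `Φ(x,y,z) = (−1)^{|y||z|} Φ(x,z,y)` for the associator `Φ`. -/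
structure IsFreeGradedPreLie (k : Type) [Field k]
    (V : Type) [AddCommGroup V] [Module k V]
    (A : Type) [AddCommGroup A] [Module k A]
    (𝒜 : ℕ → Submodule k A) (mul : A →ₗ[k] A →ₗ[k] A)
    (ι : V →ₗ[k] A) (circ : A) : Prop where
  internal : DirectSum.IsInternal 𝒜
  mul_mem : ∀ (i j : ℕ) (x y : A), x ∈ 𝒜 i → y ∈ 𝒜 j → mul x y ∈ 𝒜 (i + j)
  preLie : ∀ (j l : ℕ) (x y z : A), y ∈ 𝒜 j → z ∈ 𝒜 l →
    mul (mul x y) z - mul x (mul y z)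
      = ((-1 : k) ^ (j * l)) • (mul (mul x z) y - mul x (mul z y))
  ι_mem : ∀ v : V, ι v ∈ 𝒜 0
  circ_mem : circ ∈ 𝒜 1
  lift : ∀ (B : Type) [AddCommGroup B] [Module k B]
    (ℬ : ℕ → Submodule k B) (mulB : B →ₗ[k] B →ₗ[k] B),
    DirectSum.IsInternal ℬ →
    (∀ (i j : ℕ) (x y : B), x ∈ ℬ i → y ∈ ℬ j → mulB x y ∈ ℬ (i + j)) →
    (∀ (j l : ℕ) (x y z : B), y ∈ ℬ j → z ∈ ℬ l →
      mulB (mulB x y) z - mulB x (mulB y z)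
        = ((-1 : k) ^ (j * l)) • (mulB (mulB x z) y - mulB x (mulB z y))) →
    ∀ (f : V →ₗ[k] B), (∀ v, f v ∈ ℬ 0) → ∀ b : B, b ∈ ℬ 1 →
      ∃! g : A →ₗ[k] B,
        (∀ (i : ℕ) (x : A), x ∈ 𝒜 i → g x ∈ ℬ i) ∧
        (∀ x y : A, g (mul x y) = mulB (g x) (g y)) ∧
        (∀ v : V, g (ι v) = f v) ∧ g circ = b

section GradProj

variable {k : Type} [Field k] {M : Type} [AddCommGroup M] [Module k M]

open DirectSum

/-- The projection onto the `i`-th graded piece of an internal grading. -/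
noncomputable def gradProj (ℳ : ℕ → Submodule k M) (hint : DirectSum.IsInternal ℳ)
    (i : ℕ) : M →ₗ[k] M :=
  letI := hint.chooseDecomposition
  (ℳ i).subtype ∘ₗ (DirectSum.component k ℕ (fun j => ↥(ℳ j)) i) ∘ₗ
    (DirectSum.decomposeLinearEquiv ℳ : M →ₗ[k] ⨁ j, ↥(ℳ j))

theorem gradProj_apply (ℳ : ℕ → Submodule k M) (hint : DirectSum.IsInternal ℳ)
    (i : ℕ) (x : M) :
    letI := hint.chooseDecomposition
    gradProj ℳ hint i x = ↑(DirectSum.decompose ℳ x i) := rfl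

theorem gradProj_mem (ℳ : ℕ → Submodule k M) (hint : DirectSum.IsInternal ℳ)
    (i : ℕ) (x : M) : gradProj ℳ hint i x ∈ ℳ i := by
  letI := hint.chooseDecomposition
  rw [gradProj_apply]
  exact Subtype.coe_prop _

theorem gradProj_of_mem_same (ℳ : ℕ → Submodule k M) (hint : DirectSum.IsInternal ℳ)
    {i : ℕ} {x : M} (hx : x ∈ ℳ i) : gradProj ℳ hint i x = x := by
  letI := hint.chooseDecomposition
  rw [gradProj_apply]
  exact DirectSum.decompose_of_mem_same ℳ hx

theorem gradProj_of_mem_ne (ℳ : ℕ → Submodule k M) (hint : DirectSum.IsInternal ℳ)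
    {i j : ℕ} {x : M} (hx : x ∈ ℳ j) (hij : j ≠ i) : gradProj ℳ hint i x = 0 := by
  letI := hint.chooseDecomposition
  rw [gradProj_apply]
  exact DirectSum.decompose_of_mem_ne ℳ hx hij

theorem gradProj_sum (ℳ : ℕ → Submodule k M) (hint : DirectSum.IsInternal ℳ)
    (x : M) : ∃ s : Finset ℕ, ∑ i ∈ s, gradProj ℳ hint i x = x := by
  classical
  letI := hint.chooseDecomposition
  refine ⟨(DirectSum.decompose ℳ x).support, ?_⟩
  simp only [gradProj_apply]
  exact DirectSum.sum_support_decompose ℳ x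

/-- Internality from a system of projections. -/
theorem isInternal_of_proj (S : ℕ → Submodule k M) (p : ℕ → (M →ₗ[k] M))
    (hsame : ∀ i x, x ∈ S i → p i x = x)
    (hne : ∀ i j, j ≠ i → ∀ x ∈ S j, p i x = 0)
    (htop : ∀ x : M, x ∈ ⨆ i, S i) : DirectSum.IsInternal S := by
  apply DirectSum.isInternal_submodule_of_iSupIndep_of_iSup_eq_top
  · intro i
    rw [disjoint_iff_inf_le]
    intro x hx
    have h1 : x ∈ S i := hx.1
    have h2 : x ∈ ⨆ j, ⨆ (_ : j ≠ i), S j := hx.2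
    have hker : (⨆ j, ⨆ (_ : j ≠ i), S j) ≤ LinearMap.ker (p i) := by
      refine iSup_le fun j => iSup_le fun hj => ?_
      intro y hy
      exact hne i j hj y hy
    have := hker h2
    rw [LinearMap.mem_ker] at this
    have hx' := hsame i x h1
    rw [this] at hx'
    simpa using hx'.symm
  · rw [eq_top_iff]; intro x _; exact htop x

end GradProj

/-- Homogeneous elements generated by `ι V` (degree 0) and `circ` (degree 1). -/
inductive PreLieGen {k V A : Type} [Field k] [AddCommGroup V] [Module k V]
    [AddCommGroup A] [Module k A]
    (mul : A →ₗ[k] A →ₗ[k] A) (ι : V →ₗ[k] A) (circ : A) : ℕ → A → Prop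
  | base (v : V) : PreLieGen mul ι circ 0 (ι v)
  | circ : PreLieGen mul ι circ 1 circ
  | mul {i j : ℕ} {x y : A} : PreLieGen mul ι circ i x → PreLieGen mul ι circ j y →
      PreLieGen mul ι circ (i + j) (mul x y)

/-- Homogeneous generators of the ideal generated by `circ ⋆ circ`. -/
inductive IdlGen {k A : Type} [Field k] [AddCommGroup A] [Module k A]
    (𝒜 : ℕ → Submodule k A) (mul : A →ₗ[k] A →ₗ[k] A) (circ : A) : ℕ → A → Prop
  | base : IdlGen 𝒜 mul circ 2 (mul circ circ)
  | mulRight {i j : ℕ} {x y : A} : IdlGen 𝒜 mul circ i x → y ∈ 𝒜 j →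
      IdlGen 𝒜 mul circ (i + j) (mul x y)
  | mulLeft {i j : ℕ} {x y : A} : IdlGen 𝒜 mul circ i x → y ∈ 𝒜 j →
      IdlGen 𝒜 mul circ (j + i) (mul y x)

section Sqz

variable {k M : Type} [Field k] [AddCommGroup M] [Module k M]

/-- The square-zero-extension-style multiplication on `M × N`. -/
noncomputable def sqzMul (m : M →ₗ[k] M →ₗ[k] M) (E : M →ₗ[k] M) (c : M)
    (N : Submodule k M)
    (h1 : ∀ x y : M, x ∈ N → m x y ∈ N) (h2 : ∀ x y : M, y ∈ N → m x y ∈ N)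
    (hc : c ∈ N) : (M × N) →ₗ[k] (M × N) →ₗ[k] (M × N) :=
  LinearMap.mk₂ k
    (fun X Y => (m X.1 Y.1,
      ⟨m (X.2 : M) Y.1 + m (E X.1) (Y.2 : M) + (m (m c X.1) Y.1 - m c (m X.1 Y.1)),
        add_mem (add_mem (h1 _ _ X.2.2) (h2 _ _ Y.2.2))
          (sub_mem (h1 _ _ (h1 _ _ hc)) (h1 _ _ hc))⟩))
    (by
      intro X X' Y
      refine Prod.ext ?_ (Subtype.ext ?_) <;>
        simp only [Prod.fst_add, Prod.snd_add, Submodule.coe_add, map_add,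
          LinearMap.add_apply] <;> abel)
    (by
      intro a X Y
      refine Prod.ext ?_ (Subtype.ext ?_) <;>
        simp only [Prod.smul_fst, Prod.smul_snd, Submodule.coe_smul, map_smul,
          LinearMap.smul_apply, smul_add, smul_sub] )
    (by
      intro X Y Y'
      refine Prod.ext ?_ (Subtype.ext ?_) <;>
        simp only [Prod.fst_add, Prod.snd_add, Submodule.coe_add, map_add,
          LinearMap.add_apply] <;> abel)
    (by
      intro a X Y
      refine Prod.ext ?_ (Subtype.ext ?_) <;>
        simp only [Prod.smul_fst, Prod.smul_snd, Submodule.coe_smul, map_smul,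
          LinearMap.smul_apply, smul_add, smul_sub] )

theorem sqzMul_fst (m : M →ₗ[k] M →ₗ[k] M) (E : M →ₗ[k] M) (c : M)
    (N : Submodule k M) (h1 : ∀ x y : M, x ∈ N → m x y ∈ N)
    (h2 : ∀ x y : M, y ∈ N → m x y ∈ N) (hc : c ∈ N) (X Y : M × N) :
    (sqzMul m E c N h1 h2 hc X Y).1 = m X.1 Y.1 := rfl

theorem sqzMul_snd (m : M →ₗ[k] M →ₗ[k] M) (E : M →ₗ[k] M) (c : M)
    (N : Submodule k M) (h1 : ∀ x y : M, x ∈ N → m x y ∈ N)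
    (h2 : ∀ x y : M, y ∈ N → m x y ∈ N) (hc : c ∈ N) (X Y : M × N) :
    ((sqzMul m E c N h1 h2 hc X Y).2 : M)
      = m (X.2 : M) Y.1 + m (E X.1) (Y.2 : M)
        + (m (m c X.1) Y.1 - m c (m X.1 Y.1)) := rfl

/-- The key algebraic identity for the second component of the square-zero
multiplication. -/
theorem sqz_key (m : M →ₗ[k] M →ₗ[k] M) (c : M) (E : M →ₗ[k] M)
    (x u y v z w : M) (σ ε δ : k)
    (hEy : E y = ε • y) (hEz : E z = δ • z)
    (hEm : ∀ a b : M, E (m a b) = m (E a) (E b))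
    (hεε : ε * ε = 1)
    (hP : ∀ t : M, m (m t y) z - m t (m y z) = σ • (m (m t z) y - m t (m z y)))
    (hPv : ∀ t : M, m (m t v) z - m t (m v z) = (σ * δ) • (m (m t z) v - m t (m z v)))
    (hPw : ∀ t : M, m (m t y) w - m t (m y w) = (σ * ε) • (m (m t w) y - m t (m w y))) :
    (m (m (u : M) y + m (E x) v + (m (m c x) y - m c (m x y))) z
      + m (E (m x y)) w + (m (m c (m x y)) z - m c (m (m x y) z)))
    - (m u (m y z) + m (E x) (m v z + m (E y) w + (m (m c y) z - m c (m y z)))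
      + (m (m c x) (m y z) - m c (m x (m y z))))
    = σ • ((m (m u z + m (E x) w + (m (m c x) z - m c (m x z))) y
      + m (E (m x z)) v + (m (m c (m x z)) y - m c (m (m x z) y)))
    - (m u (m z y) + m (E x) (m w y + m (E z) v + (m (m c z) y - m c (m z y)))
      + (m (m c x) (m z y) - m c (m x (m z y))))) := by
  have hC2 : ε • (m (m (E x) y) w - m (E x) (m y w))
      = σ • (m (m (E x) w) y - m (E x) (m w y)) := by
    rw [hPw (E x), smul_smul, show ε * (σ * ε) = σ * (ε * ε) by ring, hεε, mul_one]
  have hE2 : m c (m (m x y) z) - m c (m x (m y z))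
      = σ • (m c (m (m x z) y) - m c (m x (m z y))) := by
    have := congrArg (fun t => m c t) (hP x)
    simpa only [map_sub, map_smul] using this
  have hF : m (E x) (m (m c y) z) - m (E x) (m c (m y z))
      = σ • (m (E x) (m (m c z) y) - m (E x) (m c (m z y))) := by
    have := congrArg (fun t => m (E x) t) (hP c)
    simpa only [map_sub, map_smul] using this
  have hA := hP u
  have hB := hPv (E x)
  have hD := hP (m c x)
  simp only [hEm, hEy, hEz, map_add, map_sub, map_smul, LinearMap.add_apply,
    LinearMap.sub_apply, LinearMap.smul_apply] at *
  linear_combination (norm := module) hA + hB + hC2 + hD - hE2 - hF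

end Sqz

section Gen

variable {k V A : Type} [Field k] [AddCommGroup V] [Module k V]
  [AddCommGroup A] [Module k A]
  {𝒜 : ℕ → Submodule k A} {mul : A →ₗ[k] A →ₗ[k] A} {ι : V →ₗ[k] A} {circ : A}

theorem PreLieGen.mem_grade (h : IsFreeGradedPreLie k V A 𝒜 mul ι circ) {i : ℕ} {x : A}
    (hx : PreLieGen mul ι circ i x) : x ∈ 𝒜 i := by
  induction hx with
  | base v => exact h.ι_mem v
  | circ => exact h.circ_mem
  | mul hx hy ihx ihy => exact h.mul_mem _ _ _ _ ihx ihy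

/-- The span of degree-`i` generated elements. -/
def spanGen (mul : A →ₗ[k] A →ₗ[k] A) (ι : V →ₗ[k] A) (circ : A) (i : ℕ) :
    Submodule k A :=
  Submodule.span k {x | PreLieGen mul ι circ i x}

theorem spanGen_le (h : IsFreeGradedPreLie k V A 𝒜 mul ι circ) (i : ℕ) :
    spanGen mul ι circ i ≤ 𝒜 i :=
  Submodule.span_le.2 fun _ hx => hx.mem_grade h

theorem spanGen_mul (i j : ℕ) :
    ∀ x ∈ spanGen mul ι circ i, ∀ y ∈ spanGen mul ι circ j,
      mul x y ∈ spanGen mul ι circ (i + j) := by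
  intro x hx
  refine Submodule.span_induction (p := fun x _ => ∀ y ∈ spanGen mul ι circ j,
      mul x y ∈ spanGen mul ι circ (i + j)) ?_ ?_ ?_ ?_ hx
  · intro x hxg y hy
    refine Submodule.span_induction (p := fun y _ => mul x y ∈ spanGen mul ι circ (i + j))
      ?_ ?_ ?_ ?_ hy
    · intro y hyg
      exact Submodule.subset_span (PreLieGen.mul hxg hyg)
    · simp
    · intro a b _ _ ha hb
      rw [map_add]; exact add_mem ha hb
    · intro c a _ ha
      rw [map_smul]; exact Submodule.smul_mem _ _ ha
  · intro y hy; simp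
  · intro a b _ _ ha hb y hy
    rw [map_add, LinearMap.add_apply]; exact add_mem (ha y hy) (hb y hy)
  · intro c a _ ha y hy
    rw [map_smul, LinearMap.smul_apply]; exact Submodule.smul_mem _ _ (ha y hy)

theorem grade_le_spanGen (h : IsFreeGradedPreLie k V A 𝒜 mul ι circ) (i : ℕ) :
    𝒜 i ≤ spanGen mul ι circ i := by
  classical
  set S : ℕ → Submodule k A := spanGen mul ι circ with hS
  set T : Submodule k A := ⨆ i, S i with hT
  have hST : ∀ i, S i ≤ T := fun i => le_iSup S i
  have hmulT : ∀ y ∈ T, ∀ x ∈ T, mul x y ∈ T := by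
    intro y hy x hx
    refine Submodule.iSup_induction (motive := fun x => mul x y ∈ T) S hx ?_ (by simp) ?_
    · intro i x hxi
      refine Submodule.iSup_induction (motive := fun y => mul x y ∈ T) S hy ?_ (by simp) ?_
      · intro j y hyj
        exact hST (i + j) (spanGen_mul i j x hxi y hyj)
      · intro a b ha hb
        rw [map_add]; exact add_mem ha hb
    · intro a b ha hb
      rw [map_add, LinearMap.add_apply]; exact add_mem ha hb
  -- the graded pieces of the subalgebra T
  let ℬ : ℕ → Submodule k ↥T := fun i => (S i).comap T.subtype
  have hprojT : ∀ (i : ℕ), ∀ x ∈ T, gradProj 𝒜 h.internal i x ∈ T := by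
    intro i x hx
    refine Submodule.iSup_induction (motive := fun x => gradProj 𝒜 h.internal i x ∈ T) S hx
      ?_ (by simp) ?_
    · intro j x hxj
      by_cases hji : j = i
      · subst hji
        rw [gradProj_of_mem_same 𝒜 h.internal (spanGen_le h j hxj)]
        exact hST j hxj
      · rw [gradProj_of_mem_ne 𝒜 h.internal (spanGen_le h j hxj) hji]
        simp
    · intro a b ha hb
      rw [map_add]; exact add_mem ha hb
  let pT : ℕ → (↥T →ₗ[k] ↥T) := fun i =>
    (gradProj 𝒜 h.internal i).restrict (fun x hx => hprojT i x hx)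
  have hBint : DirectSum.IsInternal ℬ := by
    refine isInternal_of_proj ℬ pT ?_ ?_ ?_
    · intro i X hX
      apply Subtype.ext
      exact gradProj_of_mem_same 𝒜 h.internal (spanGen_le h i hX)
    · intro i j hji X hX
      apply Subtype.ext
      exact gradProj_of_mem_ne 𝒜 h.internal (spanGen_le h j hX) hji
    · rintro ⟨x, hx⟩
      refine Submodule.iSup_induction'
        (motive := fun x hx => (⟨x, hx⟩ : ↥T) ∈ ⨆ i, ℬ i) (p := S) ?_ ?_ ?_ hx
      · intro i x hxi
        exact Submodule.mem_iSup_of_mem i hxi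
      · exact zero_mem _
      · intro a b ha hb hA hB
        exact add_mem hA hB
  let mulT : ↥T →ₗ[k] ↥T →ₗ[k] ↥T :=
    LinearMap.mk₂ k (fun X Y => ⟨mul X Y, hmulT _ Y.2 _ X.2⟩)
      (fun X X' Y => Subtype.ext (by simp))
      (fun a X Y => Subtype.ext (by simp))
      (fun X Y Y' => Subtype.ext (by simp))
      (fun a X Y => Subtype.ext (by simp))
  have hmulT_mem : ∀ (i j : ℕ) (X Y : ↥T), X ∈ ℬ i → Y ∈ ℬ j →
      mulT X Y ∈ ℬ (i + j) := by
    intro i j X Y hX hY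
    exact spanGen_mul i j _ hX _ hY
  have hpreT : ∀ (j l : ℕ) (X Y Z : ↥T), Y ∈ ℬ j → Z ∈ ℬ l →
      mulT (mulT X Y) Z - mulT X (mulT Y Z)
        = ((-1 : k) ^ (j * l)) • (mulT (mulT X Z) Y - mulT X (mulT Z Y)) := by
    intro j l X Y Z hY hZ
    apply Subtype.ext
    have := h.preLie j l ↑X ↑Y ↑Z (spanGen_le h j hY) (spanGen_le h l hZ)
    simpa [mulT] using this
  have hιT : ∀ v : V, ι v ∈ T := fun v =>
    hST 0 (Submodule.subset_span (PreLieGen.base v))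
  have hcircT : circ ∈ T := hST 1 (Submodule.subset_span PreLieGen.circ)
  obtain ⟨g, ⟨hg1, hg2, hg3, hg4⟩, -⟩ :=
    h.lift ↥T ℬ mulT hBint hmulT_mem hpreT
      (LinearMap.codRestrict T ι hιT) (fun v => Submodule.subset_span (PreLieGen.base v))
      ⟨circ, hcircT⟩ (Submodule.subset_span PreLieGen.circ)
  have hEU := h.lift A 𝒜 mul h.internal h.mul_mem h.preLie ι h.ι_mem circ h.circ_mem
  have hGid : T.subtype ∘ₗ g = LinearMap.id := by
    refine hEU.unique ⟨?_, ?_, ?_, ?_⟩ ⟨?_, ?_, ?_, ?_⟩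
    · intro i x hx
      exact spanGen_le h i (hg1 i x hx)
    · intro x y
      simp only [LinearMap.comp_apply, hg2, Submodule.subtype_apply]
      rfl
    · intro v
      simp only [LinearMap.comp_apply, hg3, Submodule.subtype_apply]
      rfl
    · simp only [LinearMap.comp_apply, hg4, Submodule.subtype_apply]
    · intro i x hx; exact hx
    · intro x y; rfl
    · intro v; rfl
    · rfl
  intro x hx
  have hx1 : x = ↑(g x) := by
    conv_lhs => rw [← LinearMap.id_apply (R := k) x, ← hGid]
    rfl
  rw [hx1]
  exact hg1 i x hx

end Gen

section Ideal

variable {k V A : Type} [Field k] [AddCommGroup V] [Module k V]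
  [AddCommGroup A] [Module k A]
  {𝒜 : ℕ → Submodule k A} {mul : A →ₗ[k] A →ₗ[k] A} {ι : V →ₗ[k] A} {circ : A}

theorem IdlGen.mem_grade (h : IsFreeGradedPreLie k V A 𝒜 mul ι circ) {i : ℕ} {x : A}
    (hx : IdlGen 𝒜 mul circ i x) : x ∈ 𝒜 i := by
  induction hx with
  | base => exact h.mul_mem 1 1 _ _ h.circ_mem h.circ_mem
  | mulRight hx hy ih => exact h.mul_mem _ _ _ _ ih hy
  | mulLeft hx hy ih => exact h.mul_mem _ _ _ _ hy ih

theorem ideal_spec {I : Submodule k A}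
    (hI : I = sInf {W : Submodule k A | mul circ circ ∈ W ∧
      (∀ x y : A, x ∈ W → mul x y ∈ W) ∧ (∀ x y : A, y ∈ W → mul x y ∈ W)}) :
    mul circ circ ∈ I ∧ (∀ x y : A, x ∈ I → mul x y ∈ I) ∧
      (∀ x y : A, y ∈ I → mul x y ∈ I) := by
  subst hI
  refine ⟨Submodule.mem_sInf.2 fun W hW => hW.1, ?_, ?_⟩
  · intro x y hx
    exact Submodule.mem_sInf.2 fun W hW => hW.2.1 x y (Submodule.mem_sInf.1 hx W hW)
  · intro x y hy
    exact Submodule.mem_sInf.2 fun W hW => hW.2.2 x y (Submodule.mem_sInf.1 hy W hW)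

theorem IdlGen.mem_I {I : Submodule k A}
    (spec : mul circ circ ∈ I ∧ (∀ x y : A, x ∈ I → mul x y ∈ I) ∧
      (∀ x y : A, y ∈ I → mul x y ∈ I)) {i : ℕ} {x : A}
    (hx : IdlGen 𝒜 mul circ i x) : x ∈ I := by
  induction hx with
  | base => exact spec.1
  | mulRight hx hy ih => exact spec.2.1 _ _ ih
  | mulLeft hx hy ih => exact spec.2.2 _ _ ih

theorem ideal_eq_span (h : IsFreeGradedPreLie k V A 𝒜 mul ι circ) {I : Submodule k A}
    (hI : I = sInf {W : Submodule k A | mul circ circ ∈ W ∧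
      (∀ x y : A, x ∈ W → mul x y ∈ W) ∧ (∀ x y : A, y ∈ W → mul x y ∈ W)}) :
    I = Submodule.span k {x : A | ∃ i, IdlGen 𝒜 mul circ i x} := by
  refine le_antisymm ?_ (Submodule.span_le.2 fun x ⟨i, hx⟩ =>
    hx.mem_I (ideal_spec hI))
  rw [hI]
  refine sInf_le ⟨Submodule.subset_span ⟨2, IdlGen.base⟩, ?_, ?_⟩
  · intro x y hx
    refine Submodule.span_induction (p := fun x _ =>
      mul x y ∈ Submodule.span k {x : A | ∃ i, IdlGen 𝒜 mul circ i x}) ?_ ?_ ?_ ?_ hx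
    · intro x ⟨i, hxg⟩
      obtain ⟨s, hs⟩ := gradProj_sum 𝒜 h.internal y
      rw [← hs, map_sum]
      refine Submodule.sum_mem _ fun j hj => Submodule.subset_span
        ⟨i + j, hxg.mulRight (gradProj_mem 𝒜 h.internal j y)⟩
    · simp
    · intro a b _ _ ha hb
      rw [map_add, LinearMap.add_apply]; exact add_mem ha hb
    · intro c a _ ha
      rw [map_smul, LinearMap.smul_apply]; exact Submodule.smul_mem _ _ ha
  · intro x y hy
    refine Submodule.span_induction (p := fun y _ =>
      mul x y ∈ Submodule.span k {x : A | ∃ i, IdlGen 𝒜 mul circ i x}) ?_ ?_ ?_ ?_ hy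
    · intro y ⟨i, hyg⟩
      obtain ⟨s, hs⟩ := gradProj_sum 𝒜 h.internal x
      rw [← hs, map_sum, LinearMap.sum_apply]
      refine Submodule.sum_mem _ fun j hj => Submodule.subset_span
        ⟨j + i, hyg.mulLeft (gradProj_mem 𝒜 h.internal j x)⟩
    · simp
    · intro a b _ _ ha hb
      rw [map_add]; exact add_mem ha hb
    · intro c a _ ha
      rw [map_smul]; exact Submodule.smul_mem _ _ ha

theorem gradProj_mem_I (h : IsFreeGradedPreLie k V A 𝒜 mul ι circ) {I : Submodule k A}
    (hI : I = sInf {W : Submodule k A | mul circ circ ∈ W ∧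
      (∀ x y : A, x ∈ W → mul x y ∈ W) ∧ (∀ x y : A, y ∈ W → mul x y ∈ W)})
    (i : ℕ) {x : A} (hx : x ∈ I) : gradProj 𝒜 h.internal i x ∈ I := by
  rw [ideal_eq_span h hI] at hx
  refine Submodule.span_induction (p := fun x _ => gradProj 𝒜 h.internal i x ∈ I)
    ?_ (by simp) ?_ ?_ hx
  · intro x ⟨m, hxg⟩
    by_cases hmi : m = i
    · subst hmi
      rw [gradProj_of_mem_same 𝒜 h.internal (hxg.mem_grade h)]
      exact hxg.mem_I (ideal_spec hI)
    · rw [gradProj_of_mem_ne 𝒜 h.internal (hxg.mem_grade h) hmi]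
      simp
  · intro a b _ _ ha hb
    rw [map_add]; exact add_mem ha hb
  · intro c a _ ha
    rw [map_smul]; exact Submodule.smul_mem _ _ ha

end Ideal

section SignOp

variable {k : Type} [Field k] {M : Type} [AddCommGroup M] [Module k M]

open DirectSum

/-- The parity involution of an internal grading. -/
noncomputable def signOp (ℳ : ℕ → Submodule k M) (hint : DirectSum.IsInternal ℳ) :
    M →ₗ[k] M :=
  letI := hint.chooseDecomposition
  (DirectSum.toModule k ℕ M fun i => ((-1 : k) ^ i) • (ℳ i).subtype) ∘ₗ
    (DirectSum.decomposeLinearEquiv ℳ : M →ₗ[k] ⨁ j, ↥(ℳ j))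

theorem signOp_of_mem (ℳ : ℕ → Submodule k M) (hint : DirectSum.IsInternal ℳ)
    {i : ℕ} {x : M} (hx : x ∈ ℳ i) :
    signOp ℳ hint x = ((-1 : k) ^ i) • x := by
  classical
  letI := hint.chooseDecomposition
  have h1 : DirectSum.decompose ℳ x = DirectSum.lof k ℕ (fun j => ↥(ℳ j)) i ⟨x, hx⟩ :=
    DirectSum.decompose_of_mem ℳ hx
  show (DirectSum.toModule k ℕ M fun i => ((-1 : k) ^ i) • (ℳ i).subtype)
      (DirectSum.decompose ℳ x) = _
  rw [h1, DirectSum.toModule_lof]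
  rfl

end SignOp

section SignOpMul

variable {k V A : Type} [Field k] [AddCommGroup V] [Module k V]
  [AddCommGroup A] [Module k A]
  {𝒜 : ℕ → Submodule k A} {mul : A →ₗ[k] A →ₗ[k] A} {ι : V →ₗ[k] A} {circ : A}

theorem signOp_mul (h : IsFreeGradedPreLie k V A 𝒜 mul ι circ) (x y : A) :
    signOp 𝒜 h.internal (mul x y)
      = mul (signOp 𝒜 h.internal x) (signOp 𝒜 h.internal y) := by
  obtain ⟨s, hs⟩ := gradProj_sum 𝒜 h.internal x
  obtain ⟨t, ht⟩ := gradProj_sum 𝒜 h.internal y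
  rw [← hs, ← ht]
  simp only [map_sum, LinearMap.sum_apply]
  refine Finset.sum_congr rfl fun i _ => ?_
  refine Finset.sum_congr rfl fun j _ => ?_
  rw [signOp_of_mem 𝒜 h.internal (h.mul_mem j i _ _ (gradProj_mem 𝒜 h.internal j x)
    (gradProj_mem 𝒜 h.internal i y)),
    signOp_of_mem 𝒜 h.internal (gradProj_mem 𝒜 h.internal j x),
    signOp_of_mem 𝒜 h.internal (gradProj_mem 𝒜 h.internal i y)]
  simp only [map_smul, LinearMap.smul_apply, smul_smul]
  rw [← pow_add, Nat.add_comm]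

theorem signOp_mem_I (h : IsFreeGradedPreLie k V A 𝒜 mul ι circ) {I : Submodule k A}
    (hI : I = sInf {W : Submodule k A | mul circ circ ∈ W ∧
      (∀ x y : A, x ∈ W → mul x y ∈ W) ∧ (∀ x y : A, y ∈ W → mul x y ∈ W)})
    {x : A} (hx : x ∈ I) : signOp 𝒜 h.internal x ∈ I := by
  rw [ideal_eq_span h hI] at hx
  refine Submodule.span_induction (p := fun x _ => signOp 𝒜 h.internal x ∈ I)
    ?_ (by simp) ?_ ?_ hx
  · intro x ⟨m, hxg⟩
    rw [signOp_of_mem 𝒜 h.internal (hxg.mem_grade h)]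
    exact Submodule.smul_mem _ _ (hxg.mem_I (ideal_spec hI))
  · intro a b _ _ ha hb
    rw [map_add]; exact add_mem ha hb
  · intro c a _ ha
    rw [map_smul]; exact Submodule.smul_mem _ _ ha

end SignOpMul

set_option maxHeartbeats 3000000

/-- On the quotient `rpL*(V) = pL*(V,∘)/(∘⋆∘)` of the free graded pre-Lie algebra by
the ideal generated by `∘⋆∘`, there is a unique degree `+1` map `d` with `d(v)=0`
for `v ∈ V`, `d(∘)=0`, and `d(a⋆b) = d(a)⋆b + (−1)^{|a|} a⋆d(b) + Φ(∘,a,b)`;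
moreover `d² = 0`. -/
theorem exists_unique_d_on_rpL {k V A : Type} [Field k] [CharZero k]
    [AddCommGroup V] [Module k V] [AddCommGroup A] [Module k A]
    (𝒜 : ℕ → Submodule k A) (mul : A →ₗ[k] A →ₗ[k] A)
    (ι : V →ₗ[k] A) (circ : A)
    (h : IsFreeGradedPreLie k V A 𝒜 mul ι circ)
    (I : Submodule k A)
    (hI : I = sInf {W : Submodule k A | mul circ circ ∈ W ∧
      (∀ x y : A, x ∈ W → mul x y ∈ W) ∧ (∀ x y : A, y ∈ W → mul x y ∈ W)})
    (mulQ : (A ⧸ I) →ₗ[k] (A ⧸ I) →ₗ[k] (A ⧸ I))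
    (hmulQ : ∀ x y : A, mulQ (I.mkQ x) (I.mkQ y) = I.mkQ (mul x y)) :
    (∃! d : (A ⧸ I) →ₗ[k] (A ⧸ I),
      (∀ i : ℕ, Submodule.map d (Submodule.map I.mkQ (𝒜 i))
        ≤ Submodule.map I.mkQ (𝒜 (i + 1))) ∧
      (∀ v : V, d (I.mkQ (ι v)) = 0) ∧ d (I.mkQ circ) = 0 ∧
      (∀ (i : ℕ) (a b : A ⧸ I), a ∈ Submodule.map I.mkQ (𝒜 i) →
        d (mulQ a b) = mulQ (d a) b + ((-1 : k) ^ i) • mulQ a (d b)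
          + (mulQ (mulQ (I.mkQ circ) a) b - mulQ (I.mkQ circ) (mulQ a b)))) ∧
    (∀ d : (A ⧸ I) →ₗ[k] (A ⧸ I),
      (∀ i : ℕ, Submodule.map d (Submodule.map I.mkQ (𝒜 i))
        ≤ Submodule.map I.mkQ (𝒜 (i + 1))) →
      (∀ v : V, d (I.mkQ (ι v)) = 0) → d (I.mkQ circ) = 0 →
      (∀ (i : ℕ) (a b : A ⧸ I), a ∈ Submodule.map I.mkQ (𝒜 i) →
        d (mulQ a b) = mulQ (d a) b + ((-1 : k) ^ i) • mulQ a (d b)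
          + (mulQ (mulQ (I.mkQ circ) a) b - mulQ (I.mkQ circ) (mulQ a b))) →
      d.comp d = 0) := by
  classical
  obtain ⟨hccI, hIL, hIR⟩ := ideal_spec hI
  set Qg : ℕ → Submodule k (A ⧸ I) := fun i => Submodule.map I.mkQ (𝒜 i) with hQg
  -- basic quotient facts
  have hQmul_mem : ∀ (i j : ℕ) (a b : A ⧸ I), a ∈ Qg i → b ∈ Qg j →
      mulQ a b ∈ Qg (i + j) := by
    rintro i j _ _ ⟨x, hx, rfl⟩ ⟨y, hy, rfl⟩
    rw [hmulQ]
    exact ⟨mul x y, h.mul_mem i j x y hx hy, rfl⟩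
  have hQpre : ∀ (j l : ℕ) (a b e : A ⧸ I), b ∈ Qg j → e ∈ Qg l →
      mulQ (mulQ a b) e - mulQ a (mulQ b e)
        = ((-1 : k) ^ (j * l)) • (mulQ (mulQ a e) b - mulQ a (mulQ e b)) := by
    rintro j l a _ _ ⟨y, hy, rfl⟩ ⟨z, hz, rfl⟩
    obtain ⟨x, rfl⟩ := I.mkQ_surjective a
    simp only [hmulQ]
    rw [← map_sub, ← map_sub, ← map_smul, h.preLie j l x y z hy hz]
  have hprojI : ∀ i : ℕ, I ≤ LinearMap.ker (I.mkQ ∘ₗ gradProj 𝒜 h.internal i) := by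
    intro i x hx
    simp only [LinearMap.mem_ker, LinearMap.comp_apply, Submodule.mkQ_apply,
      Submodule.Quotient.mk_eq_zero]
    exact gradProj_mem_I h hI i hx
  set projQ : ℕ → (A ⧸ I) →ₗ[k] (A ⧸ I) := fun i =>
    I.liftQ (I.mkQ ∘ₗ gradProj 𝒜 h.internal i) (hprojI i) with hprojQ
  have hprojQ_mk : ∀ (i : ℕ) (x : A),
      projQ i (I.mkQ x) = I.mkQ (gradProj 𝒜 h.internal i x) := by
    intro i x
    simp [hprojQ, Submodule.liftQ_apply]
  have hprojQ_same : ∀ (i : ℕ), ∀ a ∈ Qg i, projQ i a = a := by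
    rintro i _ ⟨x, hx, rfl⟩
    rw [hprojQ_mk, gradProj_of_mem_same 𝒜 h.internal hx]
  have hprojQ_ne : ∀ (i j : ℕ), j ≠ i → ∀ a ∈ Qg j, projQ i a = 0 := by
    rintro i j hj _ ⟨x, hx, rfl⟩
    rw [hprojQ_mk, gradProj_of_mem_ne 𝒜 h.internal hx hj, map_zero]
  have hQtop : ∀ a : A ⧸ I, a ∈ ⨆ i, Qg i := by
    intro a
    obtain ⟨x, rfl⟩ := I.mkQ_surjective a
    have hx : x ∈ ⨆ i, 𝒜 i := by rw [h.internal.submodule_iSup_eq_top]; trivial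
    refine Submodule.iSup_induction (motive := fun x => I.mkQ x ∈ ⨆ i, Qg i) 𝒜 hx ?_
      (by simp) ?_
    · intro i x hxi
      exact Submodule.mem_iSup_of_mem i ⟨x, hxi, rfl⟩
    · intro a b ha hb; rw [map_add]; exact add_mem ha hb
  have hQint : DirectSum.IsInternal Qg :=
    isInternal_of_proj Qg projQ hprojQ_same hprojQ_ne hQtop
  -- parity operator on the quotient
  have hsignI : I ≤ LinearMap.ker (I.mkQ ∘ₗ signOp 𝒜 h.internal) := by
    intro x hx
    simp only [LinearMap.mem_ker, LinearMap.comp_apply, Submodule.mkQ_apply,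
      Submodule.Quotient.mk_eq_zero]
    exact signOp_mem_I h hI hx
  set EQ : (A ⧸ I) →ₗ[k] (A ⧸ I) :=
    I.liftQ (I.mkQ ∘ₗ signOp 𝒜 h.internal) hsignI with hEQdef
  have hEQ_mk : ∀ x : A, EQ (I.mkQ x) = I.mkQ (signOp 𝒜 h.internal x) := by
    intro x; simp [hEQdef, Submodule.liftQ_apply]
  have hEQ_of_mem : ∀ (i : ℕ), ∀ a ∈ Qg i, EQ a = ((-1 : k) ^ i) • a := by
    rintro i _ ⟨x, hx, rfl⟩
    rw [hEQ_mk, signOp_of_mem 𝒜 h.internal hx, map_smul]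
  have hEQ_mul : ∀ a b : A ⧸ I, EQ (mulQ a b) = mulQ (EQ a) (EQ b) := by
    intro a b
    obtain ⟨x, rfl⟩ := I.mkQ_surjective a
    obtain ⟨y, rfl⟩ := I.mkQ_surjective b
    rw [hmulQ, hEQ_mk, signOp_mul h, ← hmulQ, hEQ_mk, hEQ_mk]
  set c : A ⧸ I := I.mkQ circ with hcdef
  have hc1 : c ∈ Qg 1 := ⟨circ, h.circ_mem, rfl⟩
  have hcc : mulQ c c = 0 := by
    rw [hcdef, hmulQ]
    simpa only [Submodule.mkQ_apply, Submodule.Quotient.mk_eq_zero] using hccI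
  -- the positive-degree part
  set N : Submodule k (A ⧸ I) := ⨆ i, Qg (i + 1) with hNdef
  have hN1 : ∀ x y : A ⧸ I, x ∈ N → mulQ x y ∈ N := by
    intro x y hx
    refine Submodule.iSup_induction (motive := fun x => mulQ x y ∈ N) _ hx ?_ (by simp) ?_
    · intro i x hxi
      refine Submodule.iSup_induction (motive := fun y => mulQ x y ∈ N) Qg (hQtop y) ?_
        (by simp) ?_
      · intro j y hyj
        refine Submodule.mem_iSup_of_mem (i + j) ?_
        have := hQmul_mem (i + 1) j x y hxi hyj
        rwa [show i + 1 + j = i + j + 1 by omega] at this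
      · intro a b ha hb; rw [map_add]; exact add_mem ha hb
    · intro a b ha hb; rw [map_add, LinearMap.add_apply]; exact add_mem ha hb
  have hN2 : ∀ x y : A ⧸ I, y ∈ N → mulQ x y ∈ N := by
    intro x y hy
    refine Submodule.iSup_induction (motive := fun y => mulQ x y ∈ N) _ hy ?_ (by simp) ?_
    · intro j y hyj
      refine Submodule.iSup_induction (motive := fun x => mulQ x y ∈ N) Qg (hQtop x) ?_
        (by simp) ?_
      · intro i x hxi
        exact Submodule.mem_iSup_of_mem (i + j) (hQmul_mem i (j + 1) x y hxi hyj)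
      · intro a b ha hb; rw [map_add, LinearMap.add_apply]; exact add_mem ha hb
    · intro a b ha hb; rw [map_add]; exact add_mem ha hb
  have hcN : c ∈ N := Submodule.mem_iSup_of_mem 0 hc1
  set mulB := sqzMul mulQ EQ c N hN1 hN2 hcN with hmulBdef
  set ℬ : ℕ → Submodule k ((A ⧸ I) × ↥N) := fun i =>
    (Qg i).prod ((Qg (i + 1)).comap N.subtype) with hBdef
  have hNproj : ∀ i : ℕ, ∀ u ∈ N, projQ i u ∈ N := by
    intro i u hu
    refine Submodule.iSup_induction (motive := fun u => projQ i u ∈ N) _ hu ?_ (by simp) ?_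
    · intro j u huj
      by_cases hji : j + 1 = i
      · rw [hprojQ_same i u (hji ▸ huj)]
        exact Submodule.mem_iSup_of_mem j huj
      · rw [hprojQ_ne i (j + 1) hji u huj]; simp
    · intro a b ha hb; rw [map_add]; exact add_mem ha hb
  have hBint : DirectSum.IsInternal ℬ := by
    refine isInternal_of_proj ℬ (fun i =>
      (projQ i).prodMap ((projQ (i + 1)).restrict (fun u hu => hNproj (i + 1) u hu)))
      ?_ ?_ ?_
    · intro i X hX
      obtain ⟨ha, hu⟩ := Submodule.mem_prod.1 hX
      rw [Submodule.mem_comap] at hu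
      refine Prod.ext ?_ (Subtype.ext ?_)
      · exact hprojQ_same i X.1 ha
      · exact hprojQ_same (i + 1) ↑X.2 hu
    · intro i j hji X hX
      obtain ⟨ha, hu⟩ := Submodule.mem_prod.1 hX
      rw [Submodule.mem_comap] at hu
      refine Prod.ext ?_ (Subtype.ext ?_)
      · exact hprojQ_ne i j hji X.1 ha
      · exact hprojQ_ne (i + 1) (j + 1) (by omega) ↑X.2 hu
    · rintro ⟨a, u⟩
      have h1 : ((a, 0) : (A ⧸ I) × ↥N) ∈ ⨆ i, ℬ i := by
        refine Submodule.iSup_induction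
          (motive := fun a => ((a, (0 : ↥N)) : (A ⧸ I) × ↥N) ∈ ⨆ i, ℬ i) Qg (hQtop a) ?_
          (zero_mem _) ?_
        · intro i a hai
          exact Submodule.mem_iSup_of_mem i (Submodule.mem_prod.2 ⟨hai, by simp⟩)
        · intro a b ha hb
          have : ((a + b, (0 : ↥N)) : (A ⧸ I) × ↥N) = (a, 0) + (b, 0) := by simp
          rw [this]; exact add_mem ha hb
      have h2 : ((0, u) : (A ⧸ I) × ↥N) ∈ ⨆ i, ℬ i := by
        obtain ⟨w, hw⟩ := u
        refine Submodule.iSup_induction' (p := fun i => Qg (i + 1))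
          (motive := fun w hw => (((0 : A ⧸ I), ⟨w, hw⟩) : (A ⧸ I) × ↥N) ∈ ⨆ i, ℬ i)
          ?_ (zero_mem _) ?_ hw
        · intro i w hwi
          exact Submodule.mem_iSup_of_mem i (Submodule.mem_prod.2 ⟨zero_mem _, hwi⟩)
        · intro w₁ w₂ hw₁ hw₂ hW₁ hW₂
          have : (((0 : A ⧸ I), (⟨w₁ + w₂, add_mem hw₁ hw₂⟩ : ↥N)) : (A ⧸ I) × ↥N)
              = (0, ⟨w₁, hw₁⟩) + (0, ⟨w₂, hw₂⟩) := by
            refine Prod.ext (by simp) (Subtype.ext ?_); simp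
          rw [this]; exact add_mem hW₁ hW₂
      have : ((a, u) : (A ⧸ I) × ↥N) = (a, 0) + (0, u) := by simp
      rw [this]; exact add_mem h1 h2
  have hBmul_mem : ∀ (i j : ℕ) (X Y : (A ⧸ I) × ↥N), X ∈ ℬ i → Y ∈ ℬ j →
      mulB X Y ∈ ℬ (i + j) := by
    intro i j X Y hX hY
    obtain ⟨ha, hu⟩ := Submodule.mem_prod.1 hX
    obtain ⟨hb, hv⟩ := Submodule.mem_prod.1 hY
    rw [Submodule.mem_comap] at hu hv
    refine Submodule.mem_prod.2 ⟨?_, ?_⟩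
    · rw [hmulBdef, sqzMul_fst]
      exact hQmul_mem i j X.1 Y.1 ha hb
    · rw [Submodule.mem_comap]
      show ((mulB X Y).2 : A ⧸ I) ∈ Qg (i + j + 1)
      rw [hmulBdef, sqzMul_snd]
      refine add_mem (add_mem ?_ ?_) (sub_mem ?_ ?_)
      · have := hQmul_mem (i + 1) j _ _ hu hb
        rwa [show i + 1 + j = i + j + 1 by omega] at this
      · have hEa : EQ X.1 ∈ Qg i := by
          rw [hEQ_of_mem i X.1 ha]; exact Submodule.smul_mem _ _ ha
        exact hQmul_mem i (j + 1) _ _ hEa hv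
      · have := hQmul_mem (1 + i) j _ _ (hQmul_mem 1 i _ _ hc1 ha) hb
        rwa [show 1 + i + j = i + j + 1 by omega] at this
      · have := hQmul_mem 1 (i + j) _ _ hc1 (hQmul_mem i j _ _ ha hb)
        rwa [show 1 + (i + j) = i + j + 1 by omega] at this
  have hBpre : ∀ (j l : ℕ) (X Y Z : (A ⧸ I) × ↥N), Y ∈ ℬ j → Z ∈ ℬ l →
      mulB (mulB X Y) Z - mulB X (mulB Y Z)
        = ((-1 : k) ^ (j * l)) • (mulB (mulB X Z) Y - mulB X (mulB Z Y)) := by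
    intro j l X Y Z hY hZ
    obtain ⟨hy, hv⟩ := Submodule.mem_prod.1 hY
    obtain ⟨hz, hw⟩ := Submodule.mem_prod.1 hZ
    rw [Submodule.mem_comap] at hv hw
    have hεε : (-1 : k) ^ j * (-1 : k) ^ j = 1 := by
      rw [← pow_add, ← two_mul, pow_mul, neg_one_sq, one_pow]
    have hPv : ∀ t : A ⧸ I,
        mulQ (mulQ t ↑Y.2) Z.1 - mulQ t (mulQ ↑Y.2 Z.1)
          = ((-1 : k) ^ (j * l) * (-1 : k) ^ l) •
            (mulQ (mulQ t Z.1) ↑Y.2 - mulQ t (mulQ Z.1 ↑Y.2)) := by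
      intro t
      have := hQpre (j + 1) l t ↑Y.2 Z.1 hv hz
      rwa [show ((-1 : k) ^ ((j + 1) * l)) = (-1 : k) ^ (j * l) * (-1 : k) ^ l by
        rw [add_mul, one_mul, pow_add]] at this
    have hPw : ∀ t : A ⧸ I,
        mulQ (mulQ t Y.1) ↑Z.2 - mulQ t (mulQ Y.1 ↑Z.2)
          = ((-1 : k) ^ (j * l) * (-1 : k) ^ j) •
            (mulQ (mulQ t ↑Z.2) Y.1 - mulQ t (mulQ ↑Z.2 Y.1)) := by
      intro t
      have := hQpre j (l + 1) t Y.1 ↑Z.2 hy hw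
      rwa [show ((-1 : k) ^ (j * (l + 1))) = (-1 : k) ^ (j * l) * (-1 : k) ^ j by
        rw [mul_add, mul_one, pow_add]] at this
    have key := sqz_key mulQ c EQ X.1 ↑X.2 Y.1 ↑Y.2 Z.1 ↑Z.2
      ((-1 : k) ^ (j * l)) ((-1 : k) ^ j) ((-1 : k) ^ l)
      (hEQ_of_mem j Y.1 hy) (hEQ_of_mem l Z.1 hz) hEQ_mul hεε
      (fun t => hQpre j l t Y.1 Z.1 hy hz) hPv hPw
    refine Prod.ext ?_ (Subtype.ext ?_)
    · simp only [Prod.fst_sub, Prod.smul_fst, hmulBdef, sqzMul_fst]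
      exact hQpre j l X.1 Y.1 Z.1 hy hz
    · simp only [Prod.snd_sub, Prod.smul_snd, AddSubgroupClass.coe_sub,
        SetLike.val_smul, hmulBdef, sqzMul_snd, sqzMul_fst]
      linear_combination (norm := module) key
  -- lift to the square-zero extension
  obtain ⟨g, ⟨hg1, hg2, hg3, hg4⟩, -⟩ :=
    h.lift ((A ⧸ I) × ↥N) ℬ mulB hBint hBmul_mem hBpre
      (LinearMap.prod (I.mkQ ∘ₗ ι) 0)
      (fun v => Submodule.mem_prod.2 ⟨⟨ι v, h.ι_mem v, rfl⟩, by simp⟩)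
      (c, 0) (Submodule.mem_prod.2 ⟨hc1, by simp⟩)
  -- the first component of g is mkQ
  obtain ⟨g₀, hg₀, hg₀uniq⟩ :=
    h.lift (A ⧸ I) Qg mulQ hQint hQmul_mem hQpre (I.mkQ ∘ₗ ι)
      (fun v => ⟨ι v, h.ι_mem v, rfl⟩) c hc1
  have hfstg : (LinearMap.fst k (A ⧸ I) ↥N) ∘ₗ g = I.mkQ := by
    have hA : ((LinearMap.fst k (A ⧸ I) ↥N) ∘ₗ g) = g₀ := by
      refine hg₀uniq _ ⟨?_, ?_, ?_, ?_⟩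
      · intro i x hx
        exact (Submodule.mem_prod.1 (hg1 i x hx)).1
      · intro x y
        simp only [LinearMap.comp_apply, LinearMap.fst_apply, hg2]
        rw [hmulBdef, sqzMul_fst]
      · intro v
        simp only [LinearMap.comp_apply, LinearMap.fst_apply, hg3, LinearMap.prod_apply,
          Function.prod_apply]
      · simp only [LinearMap.comp_apply, LinearMap.fst_apply, hg4]
    have hB : I.mkQ = g₀ := by
      refine hg₀uniq _ ⟨?_, ?_, ?_, ?_⟩
      · intro i x hx; exact ⟨x, hx, rfl⟩
      · intro x y; rw [hmulQ]
      · intro v; rfl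
      · rfl
    rw [hA, hB]
  have hgfst : ∀ x : A, (g x).1 = I.mkQ x := by
    intro x
    have := congrArg (fun f => f x) hfstg
    simpa using this
  -- g kills the ideal
  have hgI : ∀ x ∈ I, g x = 0 := by
    have hIle : I ≤ LinearMap.ker g := by
      refine hI.le.trans (sInf_le ⟨?_, ?_, ?_⟩)
      · show g (mul circ circ) = 0
        rw [hg2, hg4]
        refine Prod.ext ?_ (Subtype.ext ?_)
        · rw [hmulBdef]
          show mulQ c c = (0 : (A ⧸ I) × ↥N).1
          rw [hcc]; rfl
        · rw [hmulBdef]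
          show ((sqzMul mulQ EQ c N hN1 hN2 hcN (c, 0) (c, 0)).2 : A ⧸ I)
            = ((0 : (A ⧸ I) × ↥N).2 : A ⧸ I)
          rw [sqzMul_snd]
          simp [hcc]
      · intro x y hx
        have hx' : g x = 0 := hx
        show g (mul x y) = 0
        rw [hg2, hx']
        simp
      · intro x y hy
        have hy' : g y = 0 := hy
        show g (mul x y) = 0
        rw [hg2, hy']
        simp
    intro x hx
    exact hIle hx
  -- define d
  have hdker : I ≤ LinearMap.ker (N.subtype ∘ₗ (LinearMap.snd k (A ⧸ I) ↥N) ∘ₗ g) := by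
    intro x hx
    simp [LinearMap.mem_ker, hgI x hx]
  set d : (A ⧸ I) →ₗ[k] (A ⧸ I) :=
    I.liftQ (N.subtype ∘ₗ (LinearMap.snd k (A ⧸ I) ↥N) ∘ₗ g) hdker with hddef
  have hd_mk : ∀ x : A, d (I.mkQ x) = ((g x).2 : A ⧸ I) := by
    intro x
    simp [hddef, Submodule.liftQ_apply]
  -- properties of d
  have hdgrad : ∀ i : ℕ, Submodule.map d (Qg i) ≤ Qg (i + 1) := by
    rintro i _ ⟨_, ⟨x, hx, rfl⟩, rfl⟩
    rw [hd_mk]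
    have := (Submodule.mem_prod.1 (hg1 i x hx)).2
    rwa [Submodule.mem_comap] at this
  have hdv : ∀ v : V, d (I.mkQ (ι v)) = 0 := by
    intro v
    rw [hd_mk, hg3]
    rfl
  have hdc : d c = 0 := by
    rw [hcdef, hd_mk, hg4]
    rfl
  have hdleib : ∀ (i : ℕ) (a b : A ⧸ I), a ∈ Qg i →
      d (mulQ a b) = mulQ (d a) b + ((-1 : k) ^ i) • mulQ a (d b)
        + (mulQ (mulQ c a) b - mulQ c (mulQ a b)) := by
    rintro i _ b ⟨x, hx, rfl⟩
    obtain ⟨y, rfl⟩ := I.mkQ_surjective b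
    rw [hmulQ, hd_mk, hg2, hmulBdef, sqzMul_snd, hgfst, hgfst, ← hd_mk, ← hd_mk,
      hEQ_of_mem i (I.mkQ x) ⟨x, hx, rfl⟩]
    simp only [map_smul, LinearMap.smul_apply]
    rw [hmulQ x y]
  -- shared uniqueness argument
  have huniq : ∀ d₁ d₂ : (A ⧸ I) →ₗ[k] (A ⧸ I),
      (∀ v : V, d₁ (I.mkQ (ι v)) = 0) → d₁ (I.mkQ circ) = 0 →
      (∀ (i : ℕ) (a b : A ⧸ I), a ∈ Qg i →
        d₁ (mulQ a b) = mulQ (d₁ a) b + ((-1 : k) ^ i) • mulQ a (d₁ b)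
          + (mulQ (mulQ c a) b - mulQ c (mulQ a b))) →
      (∀ v : V, d₂ (I.mkQ (ι v)) = 0) → d₂ (I.mkQ circ) = 0 →
      (∀ (i : ℕ) (a b : A ⧸ I), a ∈ Qg i →
        d₂ (mulQ a b) = mulQ (d₂ a) b + ((-1 : k) ^ i) • mulQ a (d₂ b)
          + (mulQ (mulQ c a) b - mulQ c (mulQ a b))) →
      d₁ = d₂ := by
    intro d₁ d₂ h1v h1c h1L h2v h2c h2L
    have key : ∀ (i : ℕ) (x : A), PreLieGen mul ι circ i x →
        d₁ (I.mkQ x) = d₂ (I.mkQ x) := by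
      intro i x hx
      induction hx with
      | base v => rw [h1v, h2v]
      | circ => rw [h1c, h2c]
      | @mul i j x y hx hy ihx ihy =>
        rw [← hmulQ, h1L i _ _ ⟨x, hx.mem_grade h, rfl⟩,
          h2L i _ _ ⟨x, hx.mem_grade h, rfl⟩, ihx, ihy]
    have keyS : ∀ (i : ℕ) (x : A), x ∈ spanGen mul ι circ i →
        d₁ (I.mkQ x) = d₂ (I.mkQ x) := by
      intro i x hx
      refine Submodule.span_induction (p := fun x _ => d₁ (I.mkQ x) = d₂ (I.mkQ x))
        ?_ (by simp) ?_ ?_ hx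
      · intro x hxg; exact key i x hxg
      · intro a b _ _ ha hb; rw [map_add, map_add, map_add, ha, hb]
      · intro t a _ ha; rw [map_smul, map_smul, map_smul, ha]
    ext x
    show d₁ (I.mkQ x) = d₂ (I.mkQ x)
    have hx : x ∈ ⨆ i, 𝒜 i := by rw [h.internal.submodule_iSup_eq_top]; trivial
    refine Submodule.iSup_induction (motive := fun x => d₁ (I.mkQ x) = d₂ (I.mkQ x)) 𝒜 hx ?_
      (by simp) ?_
    · intro i x hxi
      exact keyS i x (grade_le_spanGen h i hxi)
    · intro a b ha hb; rw [map_add, map_add, map_add, ha, hb]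
  -- d squared is zero, for any d with the four properties
  have hddzero : ∀ d' : (A ⧸ I) →ₗ[k] (A ⧸ I),
      (∀ i : ℕ, Submodule.map d' (Qg i) ≤ Qg (i + 1)) →
      (∀ v : V, d' (I.mkQ (ι v)) = 0) → d' (I.mkQ circ) = 0 →
      (∀ (i : ℕ) (a b : A ⧸ I), a ∈ Qg i →
        d' (mulQ a b) = mulQ (d' a) b + ((-1 : k) ^ i) • mulQ a (d' b)
          + (mulQ (mulQ c a) b - mulQ c (mulQ a b))) →
      d'.comp d' = 0 := by
    intro d' hgrad hv hc0 hL
    have key : ∀ (i : ℕ) (x : A), PreLieGen mul ι circ i x →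
        d' (d' (I.mkQ x)) = 0 := by
      intro i x hx
      induction hx with
      | base v => rw [hv]; simp
      | circ => rw [hc0]; simp
      | @mul i j x y hx hy ihx ihy =>
        have ha : I.mkQ x ∈ Qg i := ⟨x, hx.mem_grade h, rfl⟩
        have hb : I.mkQ y ∈ Qg j := ⟨y, hy.mem_grade h, rfl⟩
        set a := I.mkQ x
        set b := I.mkQ y
        have hda : d' a ∈ Qg (i + 1) := hgrad i ⟨a, ha, rfl⟩
        have hdb : d' b ∈ Qg (j + 1) := hgrad j ⟨b, hb, rfl⟩
        have hca : mulQ c a ∈ Qg (1 + i) := hQmul_mem 1 i c a hc1 ha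
        have h0 := hL i a b ha
        have h1 := hL (i + 1) (d' a) b hda
        have h2 := hL i a (d' b) ha
        have h3 := hL (1 + i) (mulQ c a) b hca
        have h4 := hL 1 c a hc1
        have h5 := hL 1 c (mulQ a b) hc1
        rw [hc0, hcc] at h4 h5
        rw [← hmulQ, h0]
        simp only [map_add, map_sub, map_smul]
        rw [h1, h2, h3, h5, h4, h0, ihx, ihy]
        simp only [map_zero, LinearMap.zero_apply, smul_zero, zero_smul, map_add,
          map_sub, map_smul, map_neg, LinearMap.add_apply, LinearMap.sub_apply,
          LinearMap.smul_apply, LinearMap.neg_apply, pow_succ, pow_add, pow_one,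
          neg_smul, one_smul]
        module
    have keyS : ∀ (i : ℕ) (x : A), x ∈ spanGen mul ι circ i →
        d' (d' (I.mkQ x)) = 0 := by
      intro i x hx
      refine Submodule.span_induction (p := fun x _ => d' (d' (I.mkQ x)) = 0)
        ?_ (by simp) ?_ ?_ hx
      · intro x hxg; exact key i x hxg
      · intro a b _ _ ha hb; rw [map_add, map_add, map_add, ha, hb]; simp
      · intro t a _ ha; rw [map_smul, map_smul, map_smul, ha]; simp
    ext x
    show d' (d' (I.mkQ x)) = 0
    have hx : x ∈ ⨆ i, 𝒜 i := by rw [h.internal.submodule_iSup_eq_top]; trivial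
    refine Submodule.iSup_induction (motive := fun x => d' (d' (I.mkQ x)) = 0) 𝒜 hx ?_
      (by simp) ?_
    · intro i x hxi
      exact keyS i x (grade_le_spanGen h i hxi)
    · intro a b ha hb; rw [map_add, map_add, map_add, ha, hb]; simp
  refine ⟨⟨d, ⟨hdgrad, hdv, hdc, hdleib⟩, ?_⟩, ?_⟩
  · rintro d' ⟨h1, h2, h3, h4⟩
    exact huniq d' d h2 h3 h4 hdv hdc hdleib
  · intro d' hgrad hv hc0 hL
    exact hddzero d' hgrad hv hc0 hL
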